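/- arXiv:1304.4778 — 2 statements merged into one kernel-verified Lean document; each statement's English description precedes it below -/
import Mathlib

section
/- Let z ∈ [0,1] and let (Z_n) be the BEC Bhattacharyya process started at z. Then for every integer n ≥ 1 and every integer j with 1 ≤ j ≤ n: 2^{−j}·Pr( Z_n ∈ [2^{−(j+1)}, 2^{−j}] ) ≤ (n+1)·Pr( Z_n ∈ [1/4, 3/4] ) + 2^{−n}. -/
open MeasureTheory

/-- The BEC polar maps: `t₁(x) = x²`, `t₀(x) = 2x - x²`. -/
noncomputable def becT (b : Bool) (x : ℝ) : ℝ := if b then x ^ 2 else 2 * x - x ^ 2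

/-- The BEC Bhattacharyya process started at `z`. -/
noncomputable def becZ (z : ℝ) : ℕ → (ℕ → Bool) → ℝ
  | 0, _ => z
  | n + 1, ω => becT (ω n) (becZ z n ω)

/-- `μ` is the i.i.d. Bernoulli(1/2) product measure on `{0,1}^ℕ`,
characterized by its values on cylinder sets. -/
def IsBernoulliHalf (μ : Measure (ℕ → Bool)) : Prop :=
  ∀ (n : ℕ) (b : Fin n → Bool), μ {ω | ∀ i : Fin n, ω i = b i} = (2 : ENNReal)⁻¹ ^ n

open scoped Classical in
/-- number of bit-patterns of length `k` whose trajectory from `x` ends satisfying `P`. -/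
noncomputable def cnt (P : ℝ → Prop) : ℕ → ℝ → ℕ
  | 0, x => if P x then 1 else 0
  | k + 1, x => cnt P k (becT false x) + cnt P k (becT true x)

lemma becT_mem {x : ℝ} (hx : x ∈ Set.Icc (0:ℝ) 1) (b : Bool) :
    becT b x ∈ Set.Icc (0:ℝ) 1 := by
  obtain ⟨h0, h1⟩ := hx
  cases b <;> simp only [becT, if_true, Bool.false_eq_true, if_false] <;> constructor <;> nlinarith

lemma becT_le_two_mul {x : ℝ} (hx : x ∈ Set.Icc (0:ℝ) 1) (b : Bool) :
    becT b x ≤ 2 * x := by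
  obtain ⟨h0, h1⟩ := hx
  cases b <;> simp only [becT, if_true, Bool.false_eq_true, if_false] <;> nlinarith

lemma le_becT_false {x : ℝ} (hx : x ∈ Set.Icc (0:ℝ) 1) : x ≤ becT false x := by
  obtain ⟨h0, h1⟩ := hx
  simp only [becT, Bool.false_eq_true, if_false]; nlinarith

lemma one_sub_becT_false (x : ℝ) : 1 - becT false x = (1 - x) ^ 2 := by
  simp only [becT, Bool.false_eq_true, if_false]; ring

lemma cnt_le (P : ℝ → Prop) : ∀ (k : ℕ) (x : ℝ), cnt P k x ≤ 2 ^ k := by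
  intro k
  induction k with
  | zero => intro x; simp only [cnt]; split <;> simp
  | succ k ih =>
    intro x
    have := ih (becT false x)
    have := ih (becT true x)
    simp only [cnt, pow_succ]
    omega

lemma cnt_eq_zero (P : ℝ → Prop) (Q : ℕ → ℝ → Prop)
    (hered : ∀ (k : ℕ) (x : ℝ) (b : Bool), Q (k+1) x → Q k (becT b x))
    (leaf : ∀ x, Q 0 x → ¬ P x) :
    ∀ (k : ℕ) (x : ℝ), Q k x → cnt P k x = 0 := by
  intro k
  induction k with
  | zero => intro x hQ; simp only [cnt]; exact if_neg (leaf x hQ)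
  | succ k ih =>
    intro x hQ
    simp only [cnt]
    rw [ih _ (hered k x false hQ), ih _ (hered k x true hQ)]
lemma cnt_mid_pos : ∀ (k : ℕ) {x : ℝ}, x ∈ Set.Icc (1/4:ℝ) (3/4) →
    0 < cnt (· ∈ Set.Icc (1/4:ℝ) (3/4)) k x := by
  intro k
  induction k with
  | zero => intro x hx; simp only [cnt]; rw [if_pos hx]; norm_num
  | succ k ih =>
    intro x hx
    obtain ⟨hl, hr⟩ := hx
    rcases le_or_gt x (1/2) with h | h
    · have hm : becT false x ∈ Set.Icc (1/4:ℝ) (3/4) := by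
        simp only [becT, Bool.false_eq_true, if_false]
        constructor <;> nlinarith
      have := ih hm
      simp only [cnt]; omega
    · have hm : becT true x ∈ Set.Icc (1/4:ℝ) (3/4) := by
        simp only [becT, if_true]
        constructor <;> nlinarith
      have := ih hm
      simp only [cnt]; omega

/-- squaring chain: from x > 3/4, if x^(2^k) ≤ 3/4, mid is reachable in exactly k steps. -/
lemma cnt_mid_pos_sq : ∀ (k : ℕ) {x : ℝ}, x ∈ Set.Icc (0:ℝ) 1 → 3/4 < x →
    x ^ (2^k) ≤ 3/4 → 0 < cnt (· ∈ Set.Icc (1/4:ℝ) (3/4)) k x := by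
  intro k
  induction k with
  | zero => intro x _ h1 h2; rw [pow_zero, pow_one] at h2; linarith
  | succ k ih =>
    intro x hx h1 h2
    have hx2 : becT true x = x ^ 2 := by simp [becT]
    rcases le_or_gt (x ^ 2) (3/4) with h | h
    · have hm : becT true x ∈ Set.Icc (1/4:ℝ) (3/4) := by
        rw [hx2]; constructor
        · nlinarith
        · exact h
      have := cnt_mid_pos k hm
      simp only [cnt]; omega
    · have hpow : (x ^ 2) ^ (2 ^ k) ≤ 3/4 := by
        rw [← pow_mul]
        calc x ^ (2 * 2 ^ k) = x ^ (2 ^ (k+1)) := by ring_nf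
        _ ≤ 3/4 := h2
      have := ih (becT_mem hx true) (by rw [← hx2] at h; simpa [hx2] using h) (by rwa [hx2])
      simp only [cnt]; omega

/-- doubling chain: from x < 1/4, if (1-x)^(2^k) ≤ 3/4, mid is reachable in exactly k steps. -/
lemma cnt_mid_pos_t0 : ∀ (k : ℕ) {x : ℝ}, x ∈ Set.Icc (0:ℝ) 1 → x < 1/4 →
    (1-x) ^ (2^k) ≤ 3/4 → 0 < cnt (· ∈ Set.Icc (1/4:ℝ) (3/4)) k x := by
  intro k
  induction k with
  | zero => intro x _ h1 h2; rw [pow_zero, pow_one] at h2; linarith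
  | succ k ih =>
    intro x hx h1 h2
    obtain ⟨h0, hle1⟩ := hx
    have hy : becT false x = 2*x - x^2 := by simp [becT]
    rcases le_or_gt (1/4) (2*x - x^2) with h | h
    · have hm : becT false x ∈ Set.Icc (1/4:ℝ) (3/4) := by
        rw [hy]; constructor
        · exact h
        · nlinarith
      have := cnt_mid_pos k hm
      simp only [cnt]; omega
    · have hpow : (1 - becT false x) ^ (2 ^ k) ≤ 3/4 := by
        rw [one_sub_becT_false, ← pow_mul]
        calc (1-x) ^ (2 * 2 ^ k) = (1-x) ^ (2 ^ (k+1)) := by ring_nf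
        _ ≤ 3/4 := h2
      have := ih (becT_mem ⟨h0, hle1⟩ false) (by rw [hy]; linarith) hpow
      simp only [cnt]; omega
lemma bern_consequence {x : ℝ} (hx : x ∈ Set.Icc (0:ℝ) 1) (N : ℕ)
    (h : (3/4:ℝ) ≤ (1-x)^N) : (N:ℝ) * x ≤ 1/3 := by
  obtain ⟨h0, h1⟩ := hx
  have hb : 1 + (N:ℝ) * x ≤ (1+x)^N := by
    have := one_add_mul_le_pow (by linarith : (-2:ℝ) ≤ x) N
    linarith [this]
  have hprod : (1-x)^N * (1+x)^N ≤ 1 := by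
    rw [← mul_pow]
    have : (1-x) * (1+x) = 1 - x^2 := by ring
    rw [this]
    apply pow_le_one₀ <;> nlinarith
  have hNx : (0:ℝ) ≤ (N:ℝ) * x := by positivity
  nlinarith [mul_le_mul h hb (by linarith) (by positivity : (0:ℝ) ≤ (1-x)^N)]

lemma cnt_Ij_pinned (j : ℕ) : ∀ (k : ℕ) {x : ℝ}, x ∈ Set.Icc (0:ℝ) 1 →
    (3/4:ℝ) ≤ (1-x)^(2^k) →
    cnt (· ∈ Set.Icc ((1/2:ℝ)^(j+1)) ((1/2:ℝ)^j)) k x ≤ 2^j := by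
  intro k
  induction k with
  | zero =>
    intro x _ _
    simp only [cnt]
    split
    · exact Nat.one_le_two_pow
    · exact Nat.zero_le _
  | succ k ih =>
    intro x hx hp
    rcases le_or_gt j (k+4) with hj | hj
    · -- the squaring branch is dead
      have hN : ((2^(k+1) : ℕ) : ℝ) * x ≤ 1/3 := bern_consequence hx _ (by push_cast; exact_mod_cast hp)
      have hNr : (2:ℝ)^(k+1) * x ≤ 1/3 := by push_cast at hN; exact_mod_cast hN
      have hx0 : (0:ℝ) ≤ x := hx.1
      have hdead : cnt (· ∈ Set.Icc ((1/2:ℝ)^(j+1)) ((1/2:ℝ)^j)) k (becT true x) = 0 := by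
        apply cnt_eq_zero _ (fun r y => y ∈ Set.Icc (0:ℝ) 1 ∧ (2:ℝ)^r * y < (1/2)^(j+1))
        · rintro r y b ⟨hy, hlt⟩
          refine ⟨becT_mem hy b, ?_⟩
          have h1 := becT_le_two_mul hy b
          have h2 : (0:ℝ) < 2^r := by positivity
          have h3 : (2:ℝ)^(r+1) = 2^r * 2 := pow_succ 2 r
          have h4 : (2:ℝ)^(r+1)*y = 2^r*(2*y) := by rw [h3]; ring
          linarith [mul_le_mul_of_nonneg_left h1 h2.le]
        · rintro y ⟨hy, hlt⟩
          rw [pow_zero, one_mul] at hlt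
          rintro ⟨hlo, _⟩
          linarith
        · constructor
          · exact becT_mem hx true
          · have hbt : becT true x = x^2 := by simp [becT]
            rw [hbt]
            set A : ℝ := (2:ℝ)^k with hA
            have hApos : (0:ℝ) < A := by positivity
            have h2k1 : (2:ℝ)^(k+1) = 2*A := by rw [hA, pow_succ]; ring
            have hsq : (2*A*x) * (2*A*x) ≤ (1/3)*(1/3) := by
              rw [← h2k1]
              exact mul_le_mul hNr hNr (by positivity) (by norm_num)
            have hstep : (1/2:ℝ)^(k+5) ≤ (1/2)^(j+1) :=
              pow_le_pow_of_le_one (by norm_num) (by norm_num) (by omega)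
            have hval : (1/2:ℝ)^(k+5) = 1/(32*A) := by
              rw [div_pow, one_pow, show (2:ℝ)^(k+5) = 32*A from by rw [hA, pow_add]; norm_num [mul_comm]]
            have : A * x^2 < 1/(32*A) := by
              rw [lt_div_iff₀ (by positivity : (0:ℝ) < 32*A)]
              nlinarith [hsq]
            calc A * x^2 < 1/(32*A) := this
            _ = (1/2:ℝ)^(k+5) := hval.symm
            _ ≤ (1/2)^(j+1) := hstep
      have hpin0 : (3/4:ℝ) ≤ (1 - becT false x)^(2^k) := by
        rw [one_sub_becT_false, ← pow_mul]
        calc (3/4:ℝ) ≤ (1-x)^(2^(k+1)) := hp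
        _ = (1-x)^(2*2^k) := by ring_nf
      have h0 := ih (becT_mem hx false) hpin0
      simp only [cnt]
      omega
    · calc cnt _ (k+1) x ≤ 2^(k+1) := cnt_le _ _ _
      _ ≤ 2^j := Nat.pow_le_pow_right (by norm_num) (by omega)
lemma cnt_Ij_high (j : ℕ) (hj : 1 ≤ j) : ∀ (k : ℕ) {x : ℝ}, x ∈ Set.Icc (0:ℝ) 1 →
    (3/4:ℝ) < x^(2^k) →
    cnt (· ∈ Set.Icc ((1/2:ℝ)^(j+1)) ((1/2:ℝ)^j)) k x = 0 := by
  intro k x hx hgt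
  apply cnt_eq_zero _ (fun r y => y ∈ Set.Icc (0:ℝ) 1 ∧ (3/4:ℝ) < y^(2^r))
  · rintro r y b ⟨hy, hgt⟩
    refine ⟨becT_mem hy b, ?_⟩
    cases b
    · -- t0 : value grows
      have h1 : y^(2^(r+1)) ≤ y^(2^r) :=
        pow_le_pow_of_le_one hy.1 hy.2 (Nat.pow_le_pow_right (by norm_num) (by omega))
      have h2 : y^(2^r) ≤ (becT false y)^(2^r) :=
        pow_le_pow_left₀ hy.1 (le_becT_false hy) _
      linarith
    · have h : becT true y = y^2 := by simp [becT]
      rw [h, ← pow_mul]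
      calc (3/4:ℝ) < y^(2^(r+1)) := hgt
      _ = y^(2*2^r) := by ring_nf
  · rintro y ⟨hy, hgt⟩
    rw [pow_zero, pow_one] at hgt
    rintro ⟨_, hub⟩
    have : (1/2:ℝ)^j ≤ (1/2)^1 := pow_le_pow_of_le_one (by norm_num) (by norm_num) hj
    norm_num at this
    linarith
  · exact ⟨hx, hgt⟩

lemma cnt_Ij_of_mid_zero (j : ℕ) (hj : 1 ≤ j) (k : ℕ) {x : ℝ} (hx : x ∈ Set.Icc (0:ℝ) 1)
    (hM : cnt (· ∈ Set.Icc (1/4:ℝ) (3/4)) k x = 0) :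
    cnt (· ∈ Set.Icc ((1/2:ℝ)^(j+1)) ((1/2:ℝ)^j)) k x ≤ 2^j := by
  by_cases h1 : x ∈ Set.Icc (1/4:ℝ) (3/4)
  · exact absurd hM (by have := cnt_mid_pos k h1; omega)
  by_cases h2 : (3/4:ℝ) < x
  · rcases le_or_gt (x^(2^k)) (3/4) with h3 | h3
    · exact absurd hM (by have := cnt_mid_pos_sq k hx h2 h3; omega)
    · rw [cnt_Ij_high j hj k hx h3]; exact Nat.zero_le _
  · have hlt : x < 1/4 := by
      by_contra hc
      exact h1 (Set.mem_Icc.mpr ⟨not_lt.mp hc, not_lt.mp h2⟩)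
    rcases le_or_gt ((1-x)^(2^k)) (3/4) with h3 | h3
    · exact absurd hM (by have := cnt_mid_pos_t0 k hx hlt h3; omega)
    · exact cnt_Ij_pinned j k hx h3.le

/-- The key combinatorial inequality. -/
lemma cnt_main (j : ℕ) (hj : 1 ≤ j) : ∀ (k : ℕ) {x : ℝ}, x ∈ Set.Icc (0:ℝ) 1 →
    cnt (· ∈ Set.Icc ((1/2:ℝ)^(j+1)) ((1/2:ℝ)^j)) k x ≤
      2^j * ((k+1) * cnt (· ∈ Set.Icc (1/4:ℝ) (3/4)) k x + 1) := by
  intro k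
  induction k with
  | zero =>
    intro x _
    have h1 : cnt (· ∈ Set.Icc ((1/2:ℝ)^(j+1)) ((1/2:ℝ)^j)) 0 x ≤ 1 := by
      simp only [cnt]; split <;> omega
    have h2 : 1 ≤ 2^j * ((0+1) * cnt (· ∈ Set.Icc (1/4:ℝ) (3/4)) 0 x + 1) :=
      Nat.one_le_iff_ne_zero.mpr (by positivity)
    omega
  | succ k ih =>
    intro x hx
    by_cases hM : cnt (· ∈ Set.Icc (1/4:ℝ) (3/4)) (k+1) x = 0
    · have := cnt_Ij_of_mid_zero j hj (k+1) hx hM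
      have h2 : (2:ℕ)^j * 1 ≤ 2^j * ((k+1+1) * cnt (· ∈ Set.Icc (1/4:ℝ) (3/4)) (k+1) x + 1) :=
        Nat.mul_le_mul_left _ (by omega)
      omega
    · have hM1 : 1 ≤ cnt (· ∈ Set.Icc (1/4:ℝ) (3/4)) (k+1) x := Nat.one_le_iff_ne_zero.mpr hM
      have h0 := ih (becT_mem hx false)
      have h1 := ih (becT_mem hx true)
      have hsplitI : cnt (· ∈ Set.Icc ((1/2:ℝ)^(j+1)) ((1/2:ℝ)^j)) (k+1) x =
          cnt (· ∈ Set.Icc ((1/2:ℝ)^(j+1)) ((1/2:ℝ)^j)) k (becT false x) +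
          cnt (· ∈ Set.Icc ((1/2:ℝ)^(j+1)) ((1/2:ℝ)^j)) k (becT true x) := rfl
      have hsplitM : cnt (· ∈ Set.Icc (1/4:ℝ) (3/4)) (k+1) x =
          cnt (· ∈ Set.Icc (1/4:ℝ) (3/4)) k (becT false x) +
          cnt (· ∈ Set.Icc (1/4:ℝ) (3/4)) k (becT true x) := rfl
      set m0 := cnt (· ∈ Set.Icc (1/4:ℝ) (3/4)) k (becT false x)
      set m1 := cnt (· ∈ Set.Icc (1/4:ℝ) (3/4)) k (becT true x)
      have key : 2^j * ((k+1) * m0 + 1) + 2^j * ((k+1) * m1 + 1) ≤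
          2^j * ((k+1+1) * (m0 + m1) + 1) := by
        rw [← Nat.mul_add]
        apply Nat.mul_le_mul_left
        have : 1 ≤ m0 + m1 := by rw [hsplitM] at hM1; exact hM1
        nlinarith
      rw [hsplitI, hsplitM]
      calc _ ≤ 2^j * ((k+1) * m0 + 1) + 2^j * ((k+1) * m1 + 1) := Nat.add_le_add h0 h1
      _ ≤ _ := key
lemma becZ_congr (z : ℝ) : ∀ (n : ℕ) (ω ω' : ℕ → Bool),
    (∀ i, i < n → ω i = ω' i) → becZ z n ω = becZ z n ω' := by
  intro n
  induction n with
  | zero => intro ω ω' _; rfl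
  | succ n ih =>
    intro ω ω' h
    simp only [becZ]
    rw [h n (by omega), ih ω ω' (fun i hi => h i (by omega))]

lemma becZ_shift (z : ℝ) : ∀ (n : ℕ) (ω : ℕ → Bool),
    becZ z (n+1) ω = becZ (becT (ω 0) z) n (fun i => ω (i+1)) := by
  intro n
  induction n with
  | zero => intro ω; simp [becZ]
  | succ n ih =>
    intro ω
    show becT (ω (n+1)) (becZ z (n+1) ω) = becT (ω (n+1+1-1)) (becZ (becT (ω 0) z) n (fun i => ω (i+1)))
    rw [ih ω]
    norm_num

/-- extend a finite pattern by `false`s -/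
def extb (n : ℕ) (b : Fin n → Bool) : ℕ → Bool := fun i => if h : i < n then b ⟨i, h⟩ else false

noncomputable def Vn (z : ℝ) (n : ℕ) (b : Fin n → Bool) : ℝ := becZ z n (extb n b)

open scoped Classical in
lemma card_cnt (P : ℝ → Prop) : ∀ (n : ℕ) (z : ℝ),
    (Finset.univ.filter (fun b : Fin n → Bool => P (Vn z n b))).card = cnt P n z := by
  intro n
  induction n with
  | zero =>
    intro z
    have hV : ∀ b : Fin 0 → Bool, Vn z 0 b = z := fun b => rfl
    by_cases hP : P z
    · simp only [cnt, hV, hP, if_true, Finset.filter_true_of_mem (fun _ _ => hP)]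
      simp [Finset.card_univ]
    · simp only [cnt, hV, hP, if_false]
      simp
  | succ n ih =>
    intro z
    have key : ∀ (b0 : Bool) (t : Fin n → Bool),
        Vn z (n+1) (Fin.cons b0 t) = Vn (becT b0 z) n t := by
      intro b0 t
      unfold Vn
      rw [becZ_shift]
      have h0 : extb (n+1) (Fin.cons b0 t) 0 = b0 := by
        have hz : (⟨0, Nat.succ_pos n⟩ : Fin (n+1)) = 0 := by ext; simp
        simp only [extb, dif_pos (Nat.succ_pos n), hz, Fin.cons_zero]
      rw [h0]
      apply becZ_congr
      intro i hi
      simp only [extb, dif_pos (by omega : i + 1 < n + 1), dif_pos hi]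
      have : (⟨i+1, by omega⟩ : Fin (n+1)) = Fin.succ ⟨i, hi⟩ := by ext; simp
      rw [this, Fin.cons_succ]
    rw [Finset.card_filter, Fintype.sum_equiv (Fin.consEquiv (fun _ : Fin (n+1) => Bool)).symm
      _ (fun p => if P (Vn z (n+1) (Fin.cons p.1 p.2)) then 1 else 0) ?_]
    · rw [Fintype.sum_prod_type]
      simp only [key]
      rw [Fintype.sum_bool, ← Finset.card_filter, ← Finset.card_filter, ih, ih]
      show cnt P n (becT true z) + cnt P n (becT false z) = cnt P (n+1) z
      simp only [cnt]
      omega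
    · intro b
      congr 1
      have : Fin.cons ((Fin.consEquiv (fun _ : Fin (n+1) => Bool)).symm b).1
          ((Fin.consEquiv (fun _ : Fin (n+1) => Bool)).symm b).2 =
          (Fin.consEquiv (fun _ : Fin (n+1) => Bool))
            ((Fin.consEquiv (fun _ : Fin (n+1) => Bool)).symm b) := rfl
      rw [this, Equiv.apply_symm_apply]
open scoped Classical in
lemma meas_event (μ : Measure (ℕ → Bool)) (hμ : IsBernoulliHalf μ) (P : ℝ → Prop)
    (n : ℕ) (z : ℝ) :
    μ {ω | P (becZ z n ω)} = (cnt P n z : ℕ) * (2 : ENNReal)⁻¹ ^ n := by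
  set T := Finset.univ.filter (fun b : Fin n → Bool => P (Vn z n b)) with hT
  have hset : {ω | P (becZ z n ω)} =
      ⋃ b ∈ T, {ω : ℕ → Bool | ∀ i : Fin n, ω i = b i} := by
    ext ω
    simp only [Set.mem_setOf_eq, Set.mem_iUnion, exists_prop]
    constructor
    · intro h
      refine ⟨fun i => ω i, ?_, fun i => rfl⟩
      have hagree : Vn z n (fun i : Fin n => ω i) = becZ z n ω := by
        apply becZ_congr
        intro i hi
        simp [extb, dif_pos hi]
      rw [hT, Finset.mem_filter]
      exact ⟨Finset.mem_univ _, by rwa [hagree]⟩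
    · rintro ⟨b, hbT, hb⟩
      have hagree : becZ z n ω = Vn z n b := by
        apply becZ_congr
        intro i hi
        rw [hb ⟨i, hi⟩]
        simp [extb, dif_pos hi]
      rw [hagree]
      rw [hT, Finset.mem_filter] at hbT
      exact hbT.2
  have hdisj : (↑T : Set (Fin n → Bool)).PairwiseDisjoint
      (fun b => {ω : ℕ → Bool | ∀ i : Fin n, ω i = b i}) := by
    intro b _ b' _ hne
    rw [Function.onFun, Set.disjoint_left]
    intro ω hω hω'
    exact hne (funext fun i => (hω i).symm.trans (hω' i))
  have hmeas : ∀ b ∈ T, MeasurableSet {ω : ℕ → Bool | ∀ i : Fin n, ω i = b i} := by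
    intro b _
    have : {ω : ℕ → Bool | ∀ i : Fin n, ω i = b i} =
        ⋂ i : Fin n, (fun ω : ℕ → Bool => ω (i : ℕ)) ⁻¹' {b i} := by
      ext ω; simp [Set.mem_iInter]
    rw [this]
    exact MeasurableSet.iInter fun i =>
      measurable_pi_apply (i : ℕ) (measurableSet_singleton (b i))
  rw [hset, measure_biUnion_finset hdisj hmeas]
  have hsum : ∑ b ∈ T, μ {ω : ℕ → Bool | ∀ i : Fin n, ω i = b i} =
      ∑ _b ∈ T, ((2 : ENNReal)⁻¹ ^ n) := Finset.sum_congr rfl (fun b _ => hμ n b)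
  rw [hsum, Finset.sum_const, ← card_cnt P n z, hT, nsmul_eq_mul]

theorem stmt14 (μ : Measure (ℕ → Bool)) [IsProbabilityMeasure μ] (hμ : IsBernoulliHalf μ)
    (z : ℝ) (hz : z ∈ Set.Icc (0:ℝ) 1) :
    ∀ n : ℕ, 1 ≤ n → ∀ j : ℕ, 1 ≤ j → j ≤ n →
      ((1:ℝ)/2) ^ j *
          (μ {ω | becZ z n ω ∈ Set.Icc (((1:ℝ)/2) ^ (j + 1)) (((1:ℝ)/2) ^ j)}).toReal ≤
        ((n : ℝ) + 1) * (μ {ω | becZ z n ω ∈ Set.Icc (1/4 : ℝ) (3/4)}).toReal +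
          ((1:ℝ)/2) ^ n := by
  intro n hn j hj1 hjn
  have hμI := meas_event μ hμ (· ∈ Set.Icc (((1:ℝ)/2) ^ (j + 1)) (((1:ℝ)/2) ^ j)) n z
  have hμM := meas_event μ hμ (· ∈ Set.Icc (1/4 : ℝ) (3/4)) n z
  rw [hμI, hμM]
  set cI := cnt (· ∈ Set.Icc (((1:ℝ)/2) ^ (j + 1)) (((1:ℝ)/2) ^ j)) n z with hcI
  set cM := cnt (· ∈ Set.Icc (1/4 : ℝ) (3/4)) n z with hcM
  have htor : ∀ c : ℕ, ((c : ENNReal) * (2 : ENNReal)⁻¹ ^ n).toReal = (c : ℝ) * (1/2) ^ n := by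
    intro c
    rw [ENNReal.toReal_mul, ENNReal.toReal_pow, ENNReal.toReal_inv]
    norm_num
  rw [htor, htor]
  have hcnt : cI ≤ 2^j * ((n+1) * cM + 1) := cnt_main j hj1 n hz
  have hcntR : (cI : ℝ) ≤ 2^j * (((n:ℝ)+1) * cM + 1) := by
    have := (Nat.cast_le (α := ℝ)).mpr hcnt
    push_cast at this
    convert this using 2 <;> push_cast <;> ring
  have h12 : ((1:ℝ)/2) ^ j * (2:ℝ)^j = 1 := by
    rw [div_pow, one_pow, div_mul_eq_mul_div, one_mul, div_self (by positivity)]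
  have key : ((1:ℝ)/2) ^ j * (cI:ℝ) ≤ ((n:ℝ)+1) * cM + 1 := by
    calc ((1:ℝ)/2) ^ j * (cI:ℝ) ≤ ((1:ℝ)/2) ^ j * (2^j * (((n:ℝ)+1) * cM + 1)) := by
          apply mul_le_mul_of_nonneg_left hcntR (by positivity)
    _ = (((1:ℝ)/2) ^ j * 2^j) * (((n:ℝ)+1) * cM + 1) := by ring
    _ = ((n:ℝ)+1) * cM + 1 := by rw [h12, one_mul]
  have hpn : (0:ℝ) ≤ (1/2) ^ n := by positivity
  calc ((1:ℝ)/2) ^ j * ((cI:ℝ) * (1/2) ^ n) = (((1:ℝ)/2) ^ j * (cI:ℝ)) * (1/2)^n := by ring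
  _ ≤ (((n:ℝ)+1) * cM + 1) * (1/2)^n := mul_le_mul_of_nonneg_right key hpn
  _ = ((n : ℝ) + 1) * ((cM:ℝ) * (1/2) ^ n) + ((1:ℝ)/2) ^ n := by ring
end

section
/- Let t₀(x) = 2x − x² and t₁(x) = x² on [0,1]. For every integer j ≥ 2 and every y ∈ [ 2^{−j}, (2^{−j})^{2^{−j}} ], there exist b₁, …, b_j ∈ {0,1} such that t_{b₁} ∘ t_{b₂} ∘ ⋯ ∘ t_{b_j}(y) ∈ [1/4, 3/4]. -/
lemma becT_false (x : ℝ) : becT false x = 2 * x - x ^ 2 := rfl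
lemma becT_true (x : ℝ) : becT true x = x ^ 2 := rfl

lemma becT_stay (n : ℕ) : ∀ x : ℝ, x ∈ Set.Icc (1/4 : ℝ) (3/4) →
    ∃ bs : List Bool, bs.length = n ∧ bs.foldr becT x ∈ Set.Icc (1/4 : ℝ) (3/4) := by
  induction n with
  | zero => intro x hx; exact ⟨[], rfl, hx⟩
  | succ n ih =>
    intro x hx
    obtain ⟨hx1, hx2⟩ := hx
    by_cases h : x ≤ 1/2
    · have hx' : becT false x ∈ Set.Icc (1/4 : ℝ) (3/4) := by
        rw [becT_false]; constructor <;> nlinarith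
      obtain ⟨bs, hlen, hmem⟩ := ih _ hx'
      exact ⟨bs ++ [false], by simp [hlen], by simpa [List.foldr_append] using hmem⟩
    · push_neg at h
      have hx' : becT true x ∈ Set.Icc (1/4 : ℝ) (3/4) := by
        rw [becT_true]; constructor <;> nlinarith
      obtain ⟨bs, hlen, hmem⟩ := ih _ hx'
      exact ⟨bs ++ [true], by simp [hlen], by simpa [List.foldr_append] using hmem⟩

lemma becT_low (k : ℕ) : ∀ x : ℝ, 0 ≤ x → x ≤ 1/2 → (1 - x) ^ (2^k) ≤ 3/4 →
    ∃ m ≤ k, ∃ bs : List Bool, bs.length = m ∧ bs.foldr becT x ∈ Set.Icc (1/4:ℝ) (3/4) := by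
  induction k with
  | zero =>
    intro x h0 h2 h3
    simp only [pow_zero, pow_one] at h3
    exact ⟨0, le_refl 0, [], rfl, by simp only [List.foldr_nil]; exact ⟨by linarith, by linarith⟩⟩
  | succ k ih =>
    intro x h0 h2 h3
    by_cases h : 1/4 ≤ x
    · exact ⟨0, Nat.zero_le _, [], rfl, by simp only [List.foldr_nil]; exact ⟨h, by linarith⟩⟩
    · push_neg at h
      have h0' : (0:ℝ) ≤ becT false x := by rw [becT_false]; nlinarith
      have h2' : becT false x ≤ 1/2 := by rw [becT_false]; nlinarith
      have h3' : (1 - becT false x) ^ (2^k) ≤ 3/4 := by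
        have e1 : 1 - becT false x = (1 - x)^2 := by rw [becT_false]; ring
        have e2 : (2:ℕ)^(k+1) = 2 * 2^k := by ring
        rw [e1, ← pow_mul]
        rw [e2] at h3
        exact h3
      obtain ⟨m, hm, bs, hlen, hmem⟩ := ih _ h0' h2' h3'
      exact ⟨m+1, by omega, bs ++ [false], by simp [hlen], by simpa [List.foldr_append] using hmem⟩

lemma becT_high (k : ℕ) : ∀ x : ℝ, 9/16 ≤ x → x ≤ 1 → x ^ (2^k) ≤ 3/4 →
    ∃ m ≤ k, ∃ bs : List Bool, bs.length = m ∧ bs.foldr becT x ∈ Set.Icc (1/4:ℝ) (3/4) := by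
  induction k with
  | zero =>
    intro x h0 h2 h3
    simp only [pow_zero, pow_one] at h3
    exact ⟨0, le_refl 0, [], rfl, by simp only [List.foldr_nil]; exact ⟨by linarith, h3⟩⟩
  | succ k ih =>
    intro x h0 h2 h3
    by_cases h : x ≤ 3/4
    · exact ⟨0, Nat.zero_le _, [], rfl, by simp only [List.foldr_nil]; exact ⟨by linarith, h⟩⟩
    · push_neg at h
      have h0' : (9/16:ℝ) ≤ becT true x := by rw [becT_true]; nlinarith
      have h2' : becT true x ≤ 1 := by rw [becT_true]; nlinarith
      have h3' : (becT true x) ^ (2^k) ≤ 3/4 := by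
        have e1 : becT true x = x^2 := rfl
        have e2 : (2:ℕ)^(k+1) = 2 * 2^k := by ring
        rw [e1, ← pow_mul]
        rw [e2] at h3
        exact h3
      obtain ⟨m, hm, bs, hlen, hmem⟩ := ih _ h0' h2' h3'
      exact ⟨m+1, by omega, bs ++ [true], by simp [hlen], by simpa [List.foldr_append] using hmem⟩

/-- For `bs = [b₁, …, b_j]`, `bs.foldr becT y = t_{b₁}(t_{b₂}(⋯ t_{b_j}(y) ⋯))`,
i.e. `t_{b_j}` is applied first and `t_{b₁}` last. -/
theorem stmt18 (j : ℕ) (hj : 2 ≤ j) (y : ℝ)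
    (hy : y ∈ Set.Icc ((2:ℝ) ^ (-(j:ℝ))) (((2:ℝ) ^ (-(j:ℝ))) ^ ((2:ℝ) ^ (-(j:ℝ))))) :
    ∃ bs : List Bool, bs.length = j ∧ bs.foldr becT y ∈ Set.Icc (1/4 : ℝ) (3/4) := by
  obtain ⟨hy1, hy2⟩ := hy
  set a : ℝ := (2:ℝ) ^ (-(j:ℝ)) with ha_def
  have ha_pos : 0 < a := Real.rpow_pos_of_pos (by norm_num) _
  have ha_le : a ≤ 1/4 := by
    have : a ≤ (2:ℝ) ^ (-2:ℝ) := by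
      apply Real.rpow_le_rpow_of_exponent_le (by norm_num)
      have : (2:ℝ) ≤ (j:ℝ) := by exact_mod_cast hj
      linarith
    have h2 : (2:ℝ) ^ (-2:ℝ) = 1/4 := by
      rw [show (-2:ℝ) = ((-2:ℤ):ℝ) by norm_num, Real.rpow_intCast]
      norm_num
    rw [h2] at this; exact this
  have ha1 : a ≤ 1 := by linarith
  have hmul : a * (2:ℝ)^(j:ℕ) = 1 := by
    rw [ha_def, ← Real.rpow_natCast (2:ℝ) j, ← Real.rpow_add (by norm_num : (0:ℝ) < 2)]
    simp
  have hy0 : 0 ≤ y := le_trans ha_pos.le hy1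
  have hy_le1 : y ≤ 1 := le_trans hy2 (Real.rpow_le_one ha_pos.le ha1 ha_pos.le)
  -- get the reaching list
  have main : ∃ m ≤ j, ∃ bs : List Bool, bs.length = m ∧
      bs.foldr becT y ∈ Set.Icc (1/4:ℝ) (3/4) := by
    rcases lt_or_ge y (1/4) with hlt | hge
    · -- low case
      apply becT_low j y hy0 (by linarith)
      have h1 : (1 - y) ≤ Real.exp (-a) := by
        have := Real.add_one_le_exp (-a)
        linarith [hy1]
      have h2 : (1 - y) ^ (2^j) ≤ Real.exp (-a) ^ (2^j) :=
        pow_le_pow_left₀ (by linarith) h1 _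
      have h3 : Real.exp (-a) ^ (2^j : ℕ) = Real.exp (-1) := by
        rw [← Real.exp_nat_mul]
        congr 1
        push_cast
        rw [show ((2:ℝ)^(j:ℕ)) * (-a) = -(a * (2:ℝ)^(j:ℕ)) by ring, hmul]
      have h4 : Real.exp (-1) ≤ 3/4 := by
        rw [Real.exp_neg]
        have h5 : (2:ℝ) ≤ Real.exp 1 := by
          have := Real.add_one_le_exp (1:ℝ); linarith
        rw [inv_le_comm₀ (by linarith) (by norm_num)]
        linarith
      calc (1 - y) ^ (2^j) ≤ Real.exp (-a) ^ (2^j) := h2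
        _ = Real.exp (-1) := h3
        _ ≤ 3/4 := h4
    · rcases le_or_gt y (3/4) with hle | hgt
      · exact ⟨0, Nat.zero_le _, [], rfl, by simp only [List.foldr_nil]; exact ⟨hge, hle⟩⟩
      · -- high case
        apply becT_high j y (by linarith) hy_le1
        have h1 : y ^ (2^j : ℕ) ≤ (a ^ a) ^ (2^j : ℕ) :=
          pow_le_pow_left₀ hy0 hy2 _
        have h2 : (a ^ a) ^ (2^j : ℕ) = a := by
          rw [← Real.rpow_natCast (a ^ a) (2^j), ← Real.rpow_mul ha_pos.le]
          push_cast
          rw [hmul, Real.rpow_one]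
        calc y ^ (2^j) ≤ (a ^ a) ^ (2^j) := h1
          _ = a := h2
          _ ≤ 3/4 := by linarith
  obtain ⟨m, hm, bs0, hlen0, hmem0⟩ := main
  obtain ⟨bs1, hlen1, hmem1⟩ := becT_stay (j - m) _ hmem0
  refine ⟨bs1 ++ bs0, ?_, ?_⟩
  · simp [hlen0, hlen1]; omega
  · rw [List.foldr_append]; exact hmem1
end
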